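/- Let q, a, c ∈ ℂ with 0 < |q| < 1, a ≠ 0, and let k, n be integers with 1 ≤ k ≤ n. Assume 1 - c q^j ≠ 0 for 0 ≤ j ≤ n + k and 1 - (c/a) q^j ≠ 0 for 0 ≤ j ≤ k - 1. Then (1 - q^{-n})(1 - a) · (q (q;q)_k / ((1-q)(c;q)_{k+1})) · ∑_{m=0}^{n-1} (q^{1-n};q)_m (a q;q)_m (q^{k+1};q)_m q^m / ((q;q)_m (c q^{k+1};q)_m (q^2;q)_m) equals a^n · ((c/a;q)_n (q;q)_n / ((c;q)_n (c q^n;q)_k)) · ∑_{i=0}^{k} [k choose i]_q q^{C(i,2)} (-1/a)^i (c;q)_i (q^n;q)_{k-i} / ((q;q)_{n-i} (c/a;q)_i). -/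

import Mathlib

/-- The finite q-shifted factorial (a;q)_n = ∏_{j=0}^{n-1} (1 - a q^j). -/
noncomputable def qPoch (q a : ℂ) (n : ℕ) : ℂ :=
  ∏ j ∈ Finset.range n, (1 - a * q ^ j)

/-- The q-binomial coefficient [n choose k]_q = (q;q)_n / ((q;q)_k (q;q)_{n-k}). -/
noncomputable def qBinom (q : ℂ) (n k : ℕ) : ℂ :=
  qPoch q q n / (qPoch q q k * qPoch q q (n - k))

open Finset

lemma qPoch_zero (q b : ℂ) : qPoch q b 0 = 1 := by simp [qPoch]

lemma qPoch_succ (q b : ℂ) (m : ℕ) :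
    qPoch q b (m + 1) = qPoch q b m * (1 - b * q ^ m) := by
  simp [qPoch, Finset.prod_range_succ]

lemma qPoch_succ' (q b : ℂ) (m : ℕ) :
    qPoch q b (m + 1) = (1 - b) * qPoch q (b * q) m := by
  rw [qPoch, qPoch, Finset.prod_range_succ']
  rw [mul_comm]
  congr 1
  · simp
  · exact Finset.prod_congr rfl fun j _ => by ring

lemma qPoch_add (q b : ℂ) (m s : ℕ) :
    qPoch q b (m + s) = qPoch q b m * qPoch q (b * q ^ m) s := by
  induction s with
  | zero => simp [qPoch_zero]
  | succ s ih =>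
      rw [← Nat.add_assoc, qPoch_succ, ih, qPoch_succ, mul_assoc]
      congr 2
      rw [pow_add]
      ring

lemma qPoch_ne_zero {q b : ℂ} {m : ℕ} (h : ∀ j < m, 1 - b * q ^ j ≠ 0) :
    qPoch q b m ≠ 0 := by
  unfold qPoch
  exact Finset.prod_ne_zero_iff.mpr fun j hj => h j (Finset.mem_range.mp hj)

/-- `w q p j x` is the j-th scaled q-derivative of 1/(x;q)_{p+1}. -/
noncomputable def ww (q : ℂ) (p j : ℕ) (x : ℂ) : ℂ :=
  qPoch q q (p + j) / (qPoch q q p * qPoch q x (p + 1 + j))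

/-- `uu q a n i c` is the i-th scaled q-derivative of (c/a;q)_n. -/
noncomputable def uu (q a : ℂ) (n i : ℕ) (c : ℂ) : ℂ :=
  (-(1 / a)) ^ i * q ^ (i.choose 2) * qPoch q q n / qPoch q q (n - i) *
    qPoch q (q ^ i * c / a) (n - i)

noncomputable def RR (q a : ℂ) (n k : ℕ) (c : ℂ) : ℂ :=
  a ^ n * ∑ i ∈ Finset.range (k + 1),
    qBinom q k i * uu q a n i c * ww q (n - 1) (k - i) (q ^ i * c)

noncomputable def gam (q a : ℂ) (n m : ℕ) : ℂ :=
  qPoch q ((q ^ n)⁻¹) m * qPoch q a m * q ^ m / qPoch q q m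

noncomputable def LL (q a : ℂ) (n k : ℕ) (c : ℂ) : ℂ :=
  ∑ j ∈ Finset.range n, gam q a n (j + 1) * ww q j k c

/-- Telescoping certificate for the q-Chu-Vandermonde recurrence. -/
noncomputable def Wcert (q a c b : ℂ) (m : ℕ) : ℂ :=
  (1 - c) * (q ^ m - 1) * qPoch q b m * qPoch q a m /
    ((1 - b) * qPoch q q m * qPoch q c m)

lemma frac_sub_eq {A1 B1 A2 B2 A3 B3 A4 B4 : ℂ} (h1 : B1 ≠ 0) (h2 : B2 ≠ 0)
    (h3 : B3 ≠ 0) (h4 : B4 ≠ 0)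
    (h : A1 * (B2 * (B3 * B4)) - A2 * (B1 * (B3 * B4))
        = A3 * (B1 * (B2 * B4)) - A4 * (B1 * (B2 * B3))) :
    A1 / B1 - A2 / B2 = A3 / B3 - A4 / B4 := by
  rw [div_sub_div _ _ h1 h2, div_sub_div _ _ h3 h4,
    div_eq_div_iff (mul_ne_zero h1 h2) (mul_ne_zero h3 h4)]
  linear_combination h

lemma shift_rel (q b : ℂ) (m : ℕ) :
    (1 - b) * qPoch q (b * q) m = qPoch q b m * (1 - b * q ^ m) :=
  (qPoch_succ' q b m).symm.trans (qPoch_succ q b m)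

lemma cert_term (q a c b : ℂ) (m : ℕ) (hb : (1 : ℂ) - b ≠ 0) (h1c : (1 : ℂ) - c ≠ 0)
    (hCm : qPoch q c m ≠ 0) (hcqm : 1 - c * q ^ m ≠ 0)
    (hQm : qPoch q q m ≠ 0) (hq1m : (1 : ℂ) - q * q ^ m ≠ 0) :
    (1 - c) * (qPoch q b m * qPoch q a m * q ^ m / qPoch q q m / qPoch q c m)
      - (a - c) * (qPoch q (b * q) m * qPoch q a m * q ^ m / qPoch q q m
          / qPoch q (q * c) m)
      = Wcert q a c b m - Wcert q a c b (m + 1) := by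
  have rel1 := shift_rel q b m
  have rel2 := shift_rel q c m
  have hC2 : qPoch q (c * q) m ≠ 0 := by
    intro h0
    exact mul_ne_zero hCm hcqm (by rw [← rel2, h0, mul_zero])
  rw [show q * c = c * q from mul_comm q c]
  unfold Wcert
  rw [qPoch_succ q b m, qPoch_succ q a m, qPoch_succ q q m, qPoch_succ q c m, pow_succ']
  have e1 : (1 - c) * (qPoch q b m * qPoch q a m * q ^ m / qPoch q q m / qPoch q c m)
      = ((1 - c) * (qPoch q b m * qPoch q a m * q ^ m)) / (qPoch q q m * qPoch q c m) := by
    rw [div_div, ← mul_div_assoc]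
  have e2 : (a - c) * (qPoch q (b * q) m * qPoch q a m * q ^ m / qPoch q q m
        / qPoch q (c * q) m)
      = ((a - c) * (qPoch q b m * (1 - b * q ^ m)) * qPoch q a m * q ^ m * (1 - c))
        / ((1 - b) * qPoch q q m * (qPoch q c m * (1 - c * q ^ m))) := by
    rw [div_div, ← mul_div_assoc,
      div_eq_div_iff (mul_ne_zero hQm hC2)
        (mul_ne_zero (mul_ne_zero hb hQm) (mul_ne_zero hCm hcqm))]
    linear_combination ((a - c) * qPoch q a m * q ^ m * qPoch q q m *
        (qPoch q c m * (1 - c * q ^ m))) * rel1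
      - ((a - c) * qPoch q a m * q ^ m * qPoch q q m *
        (qPoch q b m * (1 - b * q ^ m))) * rel2
  rw [e1, e2]
  refine frac_sub_eq (mul_ne_zero hQm hCm)
    (mul_ne_zero (mul_ne_zero hb hQm) (mul_ne_zero hCm hcqm))
    (mul_ne_zero (mul_ne_zero hb hQm) hCm)
    (mul_ne_zero (mul_ne_zero hb (mul_ne_zero hQm hq1m)) (mul_ne_zero hCm hcqm)) ?_
  ring

noncomputable def FF (q a : ℂ) (n : ℕ) (c : ℂ) : ℂ :=
  ∑ m ∈ Finset.range (n + 1), gam q a n m / qPoch q c m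

section main
variable {q a : ℂ} (hq : ∀ m : ℕ, 1 ≤ m → q ^ m ≠ 1) (hq0 : q ≠ 0) (ha : a ≠ 0)

include hq in
lemma one_sub_qpow_ne (m : ℕ) (hm : 1 ≤ m) : (1 : ℂ) - q ^ m ≠ 0 :=
  fun h => hq m hm (sub_eq_zero.mp h).symm

include hq in
lemma qq_ne_zero (m : ℕ) : qPoch q q m ≠ 0 := by
  refine qPoch_ne_zero fun j _ => ?_
  rw [← pow_succ']
  intro h
  exact hq (j + 1) (Nat.le_add_left 1 j) (by
    have := sub_eq_zero.mp h
    exact this.symm)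

include hq in
lemma wstep (p j : ℕ) (x : ℂ) (hx : ∀ t < p + 2 + j, 1 - x * q ^ t ≠ 0) :
    ww q p j x - ww q p j (q * x) = x * ww q p (j + 1) x := by
  have h1x : (1 : ℂ) - x ≠ 0 := by simpa using hx 0 (by omega)
  have hX : qPoch q x (p + 1 + j) ≠ 0 := qPoch_ne_zero fun t ht => hx t (by omega)
  have hlast : 1 - x * q ^ (p + 1 + j) ≠ 0 := hx _ (by omega)
  have key : (1 - x) * qPoch q (x * q) (p + 1 + j)
      = qPoch q x (p + 1 + j) * (1 - x * q ^ (p + 1 + j)) :=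
    (qPoch_succ' q x (p + 1 + j)).symm.trans (qPoch_succ q x (p + 1 + j))
  have hxq : qPoch q (x * q) (p + 1 + j)
      = qPoch q x (p + 1 + j) * (1 - x * q ^ (p + 1 + j)) / (1 - x) := by
    rw [eq_div_iff h1x]; linear_combination key
  unfold ww
  have e1 : p + 1 + (j + 1) = (p + 1 + j) + 1 := by omega
  have e2 : p + (j + 1) = (p + j) + 1 := by omega
  rw [e1, e2, qPoch_succ, qPoch_succ, show q * x = x * q from mul_comm q x, hxq]
  have hQp := qq_ne_zero hq p
  field_simp
  ring

include hq hq0 ha in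
lemma ustep (n i : ℕ) (hi : i < n) (c : ℂ) :
    uu q a n i c - uu q a n i (q * c) = c * uu q a n (i + 1) c := by
  obtain ⟨s, hs⟩ : ∃ s, n - i = s + 1 := ⟨n - i - 1, by omega⟩
  have hs' : n - (i + 1) = s := by omega
  have hch : (i + 1).choose 2 = i.choose 2 + i := by
    rw [Nat.choose_succ_succ i 1, Nat.choose_one_right]; exact Nat.add_comm _ _
  unfold uu
  rw [hs, hs', hch]
  have hb' : q ^ i * (q * c) / a = (q ^ i * c / a) * q := by ring
  have hb2 : q ^ (i + 1) * c / a = (q ^ i * c / a) * q := by ring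
  rw [hb', hb2, qPoch_succ' q (q ^ i * c / a) s, qPoch_succ q (q ^ i * c / a * q) s,
    qPoch_succ q q s, pow_add]
  have hQs := qq_ne_zero hq s
  have hQn := qq_ne_zero hq n
  have h1qs : (1 : ℂ) - q * q ^ s ≠ 0 := by
    rw [← pow_succ']
    exact one_sub_qpow_ne hq (s + 1) (by omega)
  field_simp
  ring

include hq in
lemma pascal (j d : ℕ) :
    qBinom q (j + d + 2) (j + 1) =
      q ^ (j + 1) * qBinom q (j + d + 1) (j + 1) + qBinom q (j + d + 1) j := by
  unfold qBinom
  rw [show j + d + 2 - (j + 1) = d + 1 by omega, show j + d + 1 - (j + 1) = d by omega,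
    show j + d + 1 - j = d + 1 by omega,
    show j + d + 2 = (j + d + 1) + 1 by omega]
  rw [qPoch_succ q q (j + d + 1), qPoch_succ q q j, qPoch_succ q q d]
  have h1 := qq_ne_zero hq (j + d + 1)
  have h2 := qq_ne_zero hq j
  have h3 := qq_ne_zero hq d
  have h4 : (1 : ℂ) - q * q ^ j ≠ 0 := by
    rw [← pow_succ']
    exact one_sub_qpow_ne hq (j + 1) (by omega)
  have h5 : (1 : ℂ) - q * q ^ d ≠ 0 := by
    rw [← pow_succ']
    exact one_sub_qpow_ne hq (d + 1) (by omega)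
  field_simp
  ring

include hq in
lemma qBinom_zero (k : ℕ) : qBinom q k 0 = 1 := by
  unfold qBinom
  rw [qPoch_zero, Nat.sub_zero, one_mul, div_self (qq_ne_zero hq k)]

include hq in
lemma qBinom_self (k : ℕ) : qBinom q k k = 1 := by
  unfold qBinom
  rw [Nat.sub_self, qPoch_zero, mul_one, div_self (qq_ne_zero hq k)]

include hq hq0 ha in
lemma qCV (n : ℕ) :
    ∀ c : ℂ, (∀ j ≤ n, 1 - c * q ^ j ≠ 0) →
      FF q a n c = a ^ n * qPoch q (c / a) n / qPoch q c n := by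
  induction n with
  | zero => intro c _; simp [FF, gam, qPoch_zero]
  | succ n ih =>
    intro c hc
    have h1c : (1 : ℂ) - c ≠ 0 := by simpa using hc 0 (by omega)
    have hQinv : (1 : ℂ) - (q ^ (n + 1))⁻¹ ≠ 0 := by
      intro h
      have h1 : (q ^ (n + 1))⁻¹ = 1 := by linear_combination -h
      exact hq (n + 1) (by omega) (inv_eq_one.mp h1)
    have harg : (q ^ (n + 1))⁻¹ * q = (q ^ n)⁻¹ := by
      rw [pow_succ, mul_inv, mul_assoc, inv_mul_cancel₀ hq0, mul_one]
    set b : ℂ := (q ^ (n + 1))⁻¹ with hbdef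
    have key : ∀ m ∈ Finset.range (n + 2),
        ((1 - c) * (gam q a (n + 1) m / qPoch q c m)
          - (a - c) * (gam q a n m / qPoch q (q * c) m))
        = Wcert q a c b m - Wcert q a c b (m + 1) := by
      intro m hm
      rw [Finset.mem_range] at hm
      have hCm : qPoch q c m ≠ 0 := qPoch_ne_zero fun j hj => hc j (by omega)
      have hcqm : 1 - c * q ^ m ≠ 0 := hc m (by omega)
      have hQm := qq_ne_zero hq m
      have hq1m : (1 : ℂ) - q * q ^ m ≠ 0 := by
        rw [← pow_succ']
        exact one_sub_qpow_ne hq (m + 1) (by omega)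
      have := cert_term q a c b m hQinv h1c hCm hcqm hQm hq1m
      rw [show b * q = (q ^ n)⁻¹ by
        rw [hbdef, pow_succ, mul_inv, mul_assoc, inv_mul_cancel₀ hq0, mul_one]] at this
      unfold gam
      exact this
    have tele : ∑ m ∈ Finset.range (n + 2),
        ((1 - c) * (gam q a (n + 1) m / qPoch q c m)
          - (a - c) * (gam q a n m / qPoch q (q * c) m))
        = Wcert q a c b 0 - Wcert q a c b (n + 2) := by
      rw [Finset.sum_congr rfl key, Finset.sum_range_sub' (Wcert q a c b) (n + 2)]
    have hW0 : Wcert q a c b 0 = 0 := by simp [Wcert]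
    have hgamtop : gam q a n (n + 1) = 0 := by
      unfold gam
      rw [qPoch, Finset.prod_eq_zero (Finset.self_mem_range_succ n)
        (by rw [inv_mul_cancel₀ (pow_ne_zero n hq0)]; ring)]
      simp
    have hWtop : Wcert q a c b (n + 2) = 0 := by
      unfold Wcert
      rw [hbdef, qPoch, Finset.prod_eq_zero (i := n + 1) (by simp)
        (by rw [inv_mul_cancel₀ (pow_ne_zero (n + 1) hq0)]; ring)]
      simp
    rw [hW0, hWtop, sub_zero, Finset.sum_sub_distrib, ← Finset.mul_sum, ← Finset.mul_sum]
      at tele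
    have hsplit : ∑ m ∈ Finset.range (n + 2), gam q a n m / qPoch q (q * c) m
        = FF q a n (q * c) := by
      rw [Finset.sum_range_succ, hgamtop, zero_div, add_zero]
      rfl
    rw [hsplit] at tele
    have hFF : (∑ m ∈ Finset.range (n + 2), gam q a (n + 1) m / qPoch q c m)
        = FF q a (n + 1) c := rfl
    rw [hFF, ih (q * c) (fun j hj => by
      rw [show q * c * q ^ j = c * q ^ (j + 1) by ring]
      exact hc (j + 1) (by omega))] at tele
    have hCq : qPoch q (q * c) n ≠ 0 := qPoch_ne_zero fun j hj => by
      rw [show q * c * q ^ j = c * q ^ (j + 1) by ring]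
      exact hc (j + 1) (by omega)
    rw [qPoch_succ' q (c / a) n, qPoch_succ' q c n,
      show c / a * q = q * c / a by ring, show c * q = q * c from mul_comm c q]
    have hexp : FF q a (n + 1) c
        = (a - c) * (a ^ n * qPoch q (q * c / a) n / qPoch q (q * c) n) / (1 - c) := by
      rw [eq_div_iff h1c]
      linear_combination tele
    rw [hexp]
    field_simp
    ring

include hq in
lemma R_zero (n : ℕ) (hn : 1 ≤ n) (c : ℂ) :
    RR q a n 0 c = a ^ n * qPoch q (c / a) n / qPoch q c n := by
  unfold RR ww uu
  rw [Finset.sum_range_one, qBinom_zero hq 0]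
  have h1 : n - 1 + 1 = n := by omega
  have h2 : n - 1 + 0 = n - 1 := by omega
  simp only [Nat.add_zero, Nat.sub_zero, pow_zero, one_mul, h1,
    Nat.choose_eq_zero_of_lt (by norm_num : 0 < 2)]
  rw [div_self (qq_ne_zero hq n), one_mul, div_mul_eq_div_div,
    div_self (qq_ne_zero hq (n - 1)), mul_one_div, ← mul_div_assoc]

include hq hq0 ha in
lemma Rstep (n k : ℕ) (hn : 1 ≤ n) (hkn : k + 1 ≤ n) (c : ℂ)
    (hc : ∀ t ≤ n + k, 1 - c * q ^ t ≠ 0) :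
    RR q a n k c - RR q a n k (q * c) = c * RR q a n (k + 1) c := by
  unfold RR
  rw [← mul_sub, ← Finset.sum_sub_distrib]
  have hterm : ∀ i ∈ Finset.range (k + 1),
      qBinom q k i * uu q a n i c * ww q (n - 1) (k - i) (q ^ i * c)
        - qBinom q k i * uu q a n i (q * c) * ww q (n - 1) (k - i) (q ^ i * (q * c))
      = c * (q ^ i * (qBinom q k i * (uu q a n i c * ww q (n - 1) (k - i + 1) (q ^ i * c)))
          + qBinom q k i * (uu q a n (i + 1) c
              * ww q (n - 1) (k - i) (q * (q ^ i * c)))) := by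
    intro i hi
    rw [Finset.mem_range] at hi
    have hw := wstep hq (n - 1) (k - i) (q ^ i * c) (fun t ht => by
      rw [show q ^ i * c * q ^ t = c * q ^ (i + t) by rw [pow_add]; ring]
      exact hc (i + t) (by omega))
    have hu := ustep hq hq0 ha n i (by omega) c
    rw [show q ^ i * (q * c) = q * (q ^ i * c) by ring]
    linear_combination (qBinom q k i * uu q a n i c) * hw
      + (qBinom q k i * ww q (n - 1) (k - i) (q * (q ^ i * c))) * hu
  rw [Finset.sum_congr rfl hterm, ← Finset.mul_sum, mul_left_comm]
  congr 1
  set F : ℕ → ℂ := fun i =>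
    q ^ i * (qBinom q k i * (uu q a n i c * ww q (n - 1) (k - i + 1) (q ^ i * c))) with hF
  set G : ℕ → ℂ := fun i =>
    qBinom q k i * (uu q a n (i + 1) c * ww q (n - 1) (k - i) (q * (q ^ i * c))) with hG
  set H : ℕ → ℂ := fun i =>
    qBinom q (k + 1) i * uu q a n i c * ww q (n - 1) (k + 1 - i) (q ^ i * c) with hH
  have e0 : H 0 = F 0 := by
    simp only [hH, hF, pow_zero, one_mul, Nat.sub_zero, qBinom_zero hq]
  have ek : H (k + 1) = G k := by
    simp only [hH, hG, qBinom_self hq, Nat.sub_self, one_mul,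
      show q * (q ^ k * c) = q ^ (k + 1) * c by ring]
  have emid : ∀ i ∈ Finset.range k, H (i + 1) = F (i + 1) + G i := by
    intro i hi
    rw [Finset.mem_range] at hi
    have hp := pascal hq i (k - i - 1)
    rw [show i + (k - i - 1) + 2 = k + 1 by omega,
      show i + (k - i - 1) + 1 = k by omega] at hp
    simp only [hH, hF, hG]
    rw [show k + 1 - (i + 1) = k - i by omega, show k - (i + 1) + 1 = k - i by omega,
      show q * (q ^ i * c) = q ^ (i + 1) * c by ring, hp]
    ring
  congr 1
  rw [Finset.sum_add_distrib, Finset.sum_range_succ' F k, Finset.sum_range_succ G k,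
    Finset.sum_range_succ' H (k + 1), Finset.sum_range_succ (fun i => H (i + 1)) k,
    Finset.sum_congr rfl emid, Finset.sum_add_distrib, e0, ek]
  ring

include hq in
lemma Lbase (n : ℕ) (c : ℂ) (hc : ∀ t ≤ n, 1 - c * q ^ t ≠ 0) :
    FF q a n c - FF q a n (q * c) = c * LL q a n 1 c := by
  unfold FF LL
  rw [← Finset.sum_sub_distrib, Finset.sum_range_succ' (fun m => gam q a n m / qPoch q c m
    - gam q a n m / qPoch q (q * c) m) n]
  have h0 : gam q a n 0 / qPoch q c 0 - gam q a n 0 / qPoch q (q * c) 0 = 0 := by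
    rw [qPoch_zero, qPoch_zero, sub_self]
  rw [h0, add_zero, Finset.mul_sum]
  refine Finset.sum_congr rfl fun j hj => ?_
  rw [Finset.mem_range] at hj
  have hQj := qq_ne_zero hq j
  have hwrep : ∀ x : ℂ, gam q a n (j + 1) / qPoch q x (j + 1)
      = gam q a n (j + 1) * ww q j 0 x := by
    intro x
    unfold ww
    simp only [Nat.add_zero]
    rw [div_mul_eq_div_div, div_self hQj, mul_one_div]
  rw [hwrep, hwrep, ← mul_sub, wstep hq j 0 c (fun t ht => hc t (by omega))]
  ring

include hq in
lemma Lstep (n k : ℕ) (c : ℂ) (hc : ∀ t ≤ n + k, 1 - c * q ^ t ≠ 0) :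
    LL q a n k c - LL q a n k (q * c) = c * LL q a n (k + 1) c := by
  unfold LL
  rw [← Finset.sum_sub_distrib, Finset.mul_sum]
  refine Finset.sum_congr rfl fun j hj => ?_
  rw [Finset.mem_range] at hj
  rw [← mul_sub, wstep hq j k c (fun t ht => hc t (by omega))]
  ring

include hq hq0 ha in
lemma main_lemma (n : ℕ) (k : ℕ) (hk : 1 ≤ k) (hkn : k ≤ n) :
    ∀ c : ℂ, c ≠ 0 → (∀ t ≤ n + k, 1 - c * q ^ t ≠ 0) →
      LL q a n k c = RR q a n k c := by
  revert hkn
  induction k, hk using Nat.le_induction with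
  | base =>
    intro hkn c hc0 hc
    have hn : 1 ≤ n := hkn
    have hcn : ∀ t ≤ n, 1 - c * q ^ t ≠ 0 := fun t ht => hc t (by omega)
    have hqc : ∀ t ≤ n, 1 - q * c * q ^ t ≠ 0 := fun t ht => by
      rw [show q * c * q ^ t = c * q ^ (t + 1) by ring]
      exact hc (t + 1) (by omega)
    have e1 := Lbase hq (a := a) n c hcn
    have e2 := qCV hq hq0 ha n c hcn
    have e3 := qCV hq hq0 ha n (q * c) hqc
    have e4 := R_zero hq (a := a) n hn c
    have e5 := R_zero hq (a := a) n hn (q * c)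
    have e6 : RR q a n 0 c - RR q a n 0 (q * c) = c * RR q a n 1 c := by
      simpa using Rstep hq hq0 ha n 0 hn (by omega) c (fun t ht => hc t (by omega))
    apply mul_left_cancel₀ hc0
    rw [← e1, e2, e3, ← e4, ← e5]
    exact e6
  | succ k hk1 ih =>
    intro hkn c hc0 hc
    have d1 := Lstep hq (a := a) n k c (fun t ht => hc t (by omega))
    have d2 := Rstep hq hq0 ha n k (by omega) hkn c (fun t ht => hc t (by omega))
    have i1 := ih (by omega) c hc0 (fun t ht => hc t (by omega))
    have i2 := ih (by omega) (q * c) (mul_ne_zero hq0 hc0) (fun t ht => by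
      rw [show q * c * q ^ t = c * q ^ (t + 1) by ring]
      exact hc (t + 1) (by omega))
    apply mul_left_cancel₀ hc0
    rw [← d1, ← d2, i1, i2]

include hq hq0 in
lemma Leq (n k : ℕ) (hk : 1 ≤ k) (c : ℂ) (hc : ∀ t ≤ n + k, 1 - c * q ^ t ≠ 0) :
    (1 - q ^ (-(n : ℤ))) * (1 - a) *
        (q * qPoch q q k / ((1 - q) * qPoch q c (k + 1))) *
        ∑ m ∈ Finset.range n,
          qPoch q (q ^ ((1 : ℤ) - (n : ℤ))) m * qPoch q (a * q) m *
            qPoch q (q ^ (k + 1)) m * q ^ m /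
            (qPoch q q m * qPoch q (c * q ^ (k + 1)) m * qPoch q (q ^ 2) m)
      = LL q a n k c := by
  have hz1 : q ^ (-(n : ℤ)) = (q ^ n)⁻¹ := by rw [zpow_neg, zpow_natCast]
  have hz2 : q ^ ((1 : ℤ) - (n : ℤ)) = q * (q ^ n)⁻¹ := by
    rw [zpow_sub₀ hq0, zpow_one, zpow_natCast, div_eq_mul_inv]
  rw [hz1, hz2]
  unfold LL
  rw [Finset.mul_sum]
  refine Finset.sum_congr rfl fun m hm => ?_
  rw [Finset.mem_range] at hm
  unfold gam ww
  have h1q : (1 : ℂ) - q ≠ 0 := by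
    have := one_sub_qpow_ne hq 1 le_rfl
    rwa [pow_one] at this
  have hCk1 : qPoch q c (k + 1) ≠ 0 := qPoch_ne_zero fun j hj => hc j (by omega)
  have hCKm : qPoch q (c * q ^ (k + 1)) m ≠ 0 := qPoch_ne_zero fun j hj => by
    rw [show c * q ^ (k + 1) * q ^ j = c * q ^ (k + 1 + j) by rw [pow_add]; ring]
    exact hc _ (by omega)
  have hQm := qq_ne_zero hq m
  have hQk := qq_ne_zero hq k
  have hQ2 : qPoch q (q * q) m ≠ 0 := qPoch_ne_zero fun j hj => by
    rw [show q * q * q ^ j = q ^ (j + 2) by ring]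
    exact one_sub_qpow_ne hq (j + 2) (by omega)
  rw [qPoch_succ' q ((q ^ n)⁻¹) m, qPoch_succ' q a m, qPoch_succ' q q m,
    pow_succ' q m, show (q ^ n)⁻¹ * q = q * (q ^ n)⁻¹ from mul_comm _ _,
    show (q : ℂ) ^ 2 = q * q from pow_two q,
    show m + k = k + m by omega, qPoch_add q q k m, ← pow_succ',
    show m + 1 + k = (k + 1) + m by omega, qPoch_add q c (k + 1) m]
  field_simp
  ring

include hq hq0 ha in
lemma Req (n k : ℕ) (hn : 1 ≤ n) (hkn : k ≤ n) (c : ℂ)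
    (hc : ∀ t ≤ n + k, 1 - c * q ^ t ≠ 0)
    (hca : ∀ t < k, 1 - c / a * q ^ t ≠ 0) :
    RR q a n k c =
      a ^ n *
        (qPoch q (c / a) n * qPoch q q n / (qPoch q c n * qPoch q (c * q ^ n) k)) *
        ∑ i ∈ Finset.range (k + 1),
          qBinom q k i * q ^ (i.choose 2) * (-(1 / a)) ^ i *
            (qPoch q c i * qPoch q (q ^ n) (k - i)) /
            (qPoch q q (n - i) * qPoch q (c / a) i) := by
  unfold RR
  rw [mul_assoc]
  congr 1
  rw [Finset.mul_sum]
  refine Finset.sum_congr rfl fun i hi => ?_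
  rw [Finset.mem_range] at hi
  obtain ⟨d, hd⟩ := Nat.exists_eq_add_of_le (show i ≤ k by omega)
  subst hd
  unfold uu ww
  rw [show i + d - i = d by omega, show n - 1 + 1 + d = n + d by omega]
  -- nonvanishing facts
  have hCAi : qPoch q (c / a) i ≠ 0 := qPoch_ne_zero fun j hj => hca j (by omega)
  have hCi : qPoch q c i ≠ 0 := qPoch_ne_zero fun j hj => hc j (by omega)
  have hCn : qPoch q c n ≠ 0 := qPoch_ne_zero fun j hj => hc j (by omega)
  have hCQ : qPoch q (c * q ^ n) (i + d) ≠ 0 := qPoch_ne_zero fun j hj => by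
    rw [show c * q ^ n * q ^ j = c * q ^ (n + j) by rw [pow_add]; ring]
    exact hc _ (by omega)
  have hQn1 := qq_ne_zero hq (n - 1)
  have hQni := qq_ne_zero hq (n - i)
  have hCQ' : qPoch q (q ^ n * c) (i + d) ≠ 0 := by rw [mul_comm]; exact hCQ
  have hCA' : qPoch q (c * a⁻¹) i ≠ 0 := by rw [← div_eq_mul_inv]; exact hCAi
  have hai : a ^ i ≠ 0 := pow_ne_zero i ha
  -- structure relations
  have hC := qPoch_add q (c / a) i (n - i)
  rw [show i + (n - i) = n by omega, show c / a * q ^ i = q ^ i * c / a by ring] at hC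
  have e1 : qPoch q (q ^ i * c / a) (n - i) = qPoch q (c / a) n / qPoch q (c / a) i := by
    rw [hC, mul_div_cancel_left₀ _ hCAi]
  have hA := qPoch_add q c n (i + d)
  have hB := qPoch_add q c i (n + d)
  rw [show i + (n + d) = n + (i + d) by omega,
    show c * q ^ i = q ^ i * c from mul_comm c _] at hB
  have e2 : qPoch q (q ^ i * c) (n + d)
      = qPoch q c n * qPoch q (c * q ^ n) (i + d) / qPoch q c i := by
    rw [← hA, hB, mul_div_cancel_left₀ _ hCi]
  have e3 := qPoch_add q q (n - 1) d
  rw [show q * q ^ (n - 1) = q ^ n by rw [← pow_succ']; congr 1; omega] at e3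
  rw [e1, e2, e3]
  field_simp

end main

theorem stmt16 (q a c : ℂ) (k n : ℕ)
    (hq0 : 0 < ‖q‖) (hq1 : ‖q‖ < 1)
    (ha : a ≠ 0) (hk : 1 ≤ k) (hkn : k ≤ n)
    (hc : ∀ j : ℕ, j ≤ n + k → 1 - c * q ^ j ≠ 0)
    (hca : ∀ j : ℕ, j < k → 1 - c / a * q ^ j ≠ 0) :
    (1 - q ^ (-(n : ℤ))) * (1 - a) *
        (q * qPoch q q k / ((1 - q) * qPoch q c (k + 1))) *
        ∑ m ∈ Finset.range n,
          qPoch q (q ^ ((1 : ℤ) - (n : ℤ))) m * qPoch q (a * q) m *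
            qPoch q (q ^ (k + 1)) m * q ^ m /
            (qPoch q q m * qPoch q (c * q ^ (k + 1)) m * qPoch q (q ^ 2) m) =
      a ^ n *
        (qPoch q (c / a) n * qPoch q q n / (qPoch q c n * qPoch q (c * q ^ n) k)) *
        ∑ i ∈ Finset.range (k + 1),
          qBinom q k i * q ^ (i.choose 2) * (-(1 / a)) ^ i *
            (qPoch q c i * qPoch q (q ^ n) (k - i)) /
            (qPoch q q (n - i) * qPoch q (c / a) i) := by
  have hqne : q ≠ 0 := fun h => by simp [h] at hq0
  have hpow : ∀ m : ℕ, 1 ≤ m → q ^ m ≠ 1 := by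
    intro m hm h1
    have h2 : ‖q‖ ^ m < 1 := pow_lt_one₀ (norm_nonneg q) hq1 (by omega)
    rw [← norm_pow, h1] at h2
    simp at h2
  set l : ℂ → ℂ := fun x =>
    (1 - q ^ (-(n : ℤ))) * (1 - a) *
        (q * qPoch q q k / ((1 - q) * qPoch q x (k + 1))) *
        ∑ m ∈ Finset.range n,
          qPoch q (q ^ ((1 : ℤ) - (n : ℤ))) m * qPoch q (a * q) m *
            qPoch q (q ^ (k + 1)) m * q ^ m /
            (qPoch q q m * qPoch q (x * q ^ (k + 1)) m * qPoch q (q ^ 2) m) with hldef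
  set r : ℂ → ℂ := fun x =>
    a ^ n *
        (qPoch q (x / a) n * qPoch q q n / (qPoch q x n * qPoch q (x * q ^ n) k)) *
        ∑ i ∈ Finset.range (k + 1),
          qBinom q k i * q ^ (i.choose 2) * (-(1 / a)) ^ i *
            (qPoch q x i * qPoch q (q ^ n) (k - i)) /
            (qPoch q q (n - i) * qPoch q (x / a) i) with hrdef
  have key : ∀ x : ℂ, x ≠ 0 → (∀ j ≤ n + k, 1 - x * q ^ j ≠ 0) →
      (∀ j < k, 1 - x / a * q ^ j ≠ 0) → l x = r x := by
    intro x hx0 hxc hxca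
    calc l x = LL q a n k x := Leq hpow hqne n k hk x hxc
    _ = RR q a n k x := main_lemma hpow hqne ha n k hk hkn x hx0 hxc
    _ = r x := Req hpow hqne ha n k (le_trans hk hkn) hkn x hxc hxca
  rcases eq_or_ne c 0 with rfl | hc0
  · -- continuity argument at c = 0
    show l 0 = r 0
    have qP0 : ∀ m : ℕ, qPoch q 0 m = 1 := fun m => by simp [qPoch]
    have contP : ∀ (m : ℕ) (g : ℂ → ℂ), Continuous g →
        Continuous fun x => qPoch q (g x) m := by
      intro m g hg
      unfold qPoch
      exact continuous_finset_prod _ fun j _ => continuous_const.sub (hg.mul continuous_const)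
    have h1q : (1 : ℂ) - q ≠ 0 := by
      have := one_sub_qpow_ne hpow 1 le_rfl
      rwa [pow_one] at this
    have hQ2 : ∀ m : ℕ, qPoch q (q ^ 2) m ≠ 0 := fun m => qPoch_ne_zero fun j hj => by
      rw [show (q : ℂ) ^ 2 * q ^ j = q ^ (j + 2) by ring]
      exact one_sub_qpow_ne hpow (j + 2) (by omega)
    have hlc : ContinuousAt l 0 := by
      rw [hldef]
      apply ContinuousAt.mul
      · apply ContinuousAt.mul continuousAt_const
        refine ContinuousAt.div continuousAt_const
          ((continuous_const.mul (contP (k + 1) id continuous_id)).continuousAt) ?_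
        show (1 - q) * qPoch q (id (0 : ℂ)) (k + 1) ≠ 0
        rw [id_eq, qP0, mul_one]
        exact h1q
      · refine tendsto_finset_sum _ fun m _ => ?_
        refine ContinuousAt.div continuousAt_const
          (((continuous_const.mul (contP m (fun x => x * q ^ (k + 1))
            (continuous_id.mul continuous_const))).mul continuous_const).continuousAt) ?_
        show qPoch q q m * qPoch q ((0 : ℂ) * q ^ (k + 1)) m * qPoch q (q ^ 2) m ≠ 0
        rw [zero_mul, qP0]
        rw [mul_one]
        exact mul_ne_zero (qq_ne_zero hpow m) (hQ2 m)
    have hrc : ContinuousAt r 0 := by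
      rw [hrdef]
      apply ContinuousAt.mul
      · apply ContinuousAt.mul continuousAt_const
        refine ContinuousAt.div
          (((contP n (fun x => x / a) (continuous_id.div_const a)).mul
            continuous_const).continuousAt)
          (((contP n id continuous_id).mul
            (contP k (fun x => x * q ^ n) (continuous_id.mul continuous_const))).continuousAt) ?_
        show qPoch q (id (0 : ℂ)) n * qPoch q ((0 : ℂ) * q ^ n) k ≠ 0
        rw [id_eq, zero_mul, qP0, qP0, mul_one]
        exact one_ne_zero
      · refine tendsto_finset_sum _ fun i _ => ?_
        refine ContinuousAt.div
          ((continuous_const.mul ((contP i id continuous_id).mul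
            continuous_const)).continuousAt)
          ((continuous_const.mul (contP i (fun x => x / a)
            (continuous_id.div_const a))).continuousAt) ?_
        show qPoch q q (n - i) * qPoch q ((0 : ℂ) / a) i ≠ 0
        rw [zero_div, qP0, mul_one]
        exact qq_ne_zero hpow (n - i)
    have hev : ∀ᶠ x in nhdsWithin (0 : ℂ) {(0 : ℂ)}ᶜ, l x = r x := by
      have h1 : ∀ᶠ x in nhds (0 : ℂ), ∀ j ∈ Finset.range (n + k + 1), 1 - x * q ^ j ≠ 0 := by
        rw [Filter.eventually_all_finset]
        intro j _
        exact ((continuous_const.sub (continuous_id.mul continuous_const)).continuousAt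
          (x := (0 : ℂ))).eventually_ne (by simp)
      have h2 : ∀ᶠ x in nhds (0 : ℂ), ∀ j ∈ Finset.range k, 1 - x / a * q ^ j ≠ 0 := by
        rw [Filter.eventually_all_finset]
        intro j _
        exact ((continuous_const.sub ((continuous_id.div_const a).mul
          continuous_const)).continuousAt (x := (0 : ℂ))).eventually_ne (by simp)
      filter_upwards [h1.filter_mono nhdsWithin_le_nhds, h2.filter_mono nhdsWithin_le_nhds,
        eventually_mem_nhdsWithin] with x hx1 hx2 hx0
      exact key x (Set.mem_compl_singleton_iff.mp hx0)
        (fun j hj => hx1 j (Finset.mem_range.mpr (by omega)))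
        (fun j hj => hx2 j (Finset.mem_range.mpr hj))
    exact tendsto_nhds_unique (hlc.tendsto.mono_left nhdsWithin_le_nhds)
      ((hrc.tendsto.mono_left nhdsWithin_le_nhds).congr' (Filter.EventuallyEq.symm hev))
  · exact key c hc0 hc hca
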